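/- Let p be buyer-optimal market clearing prices with profits q, and M a maximum-value perfect matching. Then for every buyer j, v*_{-j} = v* - q_j, where v*_{-j} is the maximum value of a matching when buyer j is replaced by a dummy buyer with zero valuations (equivalently, the maximum value of a matching of I into J \ {j} of size n-1). -/

import Mathlib

open Finset

noncomputable section

/-- Profit of buyer `j` at prices `p`: `max_i (v i j - p i)`. -/
def profit {n : ℕ} (v : Fin n → Fin n → ℝ) (p : Fin n → ℝ) (j : Fin n) : ℝ :=
  ⨆ i, v i j - p i

/-- Value of a perfect matching, where buyer `j` is assigned item `M j`. -/
def mval {n : ℕ} (v : Fin n → Fin n → ℝ) (M : Fin n ≃ Fin n) : ℝ :=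
  ∑ j, v (M j) j

/-- Maximum value of a perfect matching. -/
def vstar {n : ℕ} (v : Fin n → Fin n → ℝ) : ℝ :=
  ⨆ M : Fin n ≃ Fin n, mval v M

/-- `M` witnesses that `p` is market clearing: every buyer gets a profit-maximizing item. -/
def ClearingWitness {n : ℕ} (v : Fin n → Fin n → ℝ) (p : Fin n → ℝ) (M : Fin n ≃ Fin n) : Prop :=
  ∀ j i', v i' j - p i' ≤ v (M j) j - p (M j)

/-- `p` is market clearing: some perfect matching assigns every buyer an item
maximizing her profit `v i j - p i`. -/
def IsMC {n : ℕ} (v : Fin n → Fin n → ℝ) (p : Fin n → ℝ) : Prop :=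
  ∃ M : Fin n ≃ Fin n, ClearingWitness v p M

/-- Buyer-optimal market clearing prices: nonnegative, market clearing, and of
minimum total price among all nonnegative market clearing price vectors. -/
def BuyerOptimal {n : ℕ} (v : Fin n → Fin n → ℝ) (p : Fin n → ℝ) : Prop :=
  (∀ i, 0 ≤ p i) ∧ IsMC v p ∧
    ∀ p' : Fin n → ℝ, (∀ i, 0 ≤ p' i) → IsMC v p' → ∑ i, p i ≤ ∑ i, p' i

/-- `v*_{-j}`: maximum matching value when buyer `j` is replaced by a dummy
buyer with zero valuations. -/
def vstarDummy {n : ℕ} (v : Fin n → Fin n → ℝ) (j : Fin n) : ℝ :=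
  ⨆ M : Fin n ≃ Fin n, ∑ j' ∈ Finset.univ.erase j, v (M j') j'

/-- `v*_{-j}^{-i}`: maximum value of a perfect matching between `I \ {i}` and `J \ {j}`. -/
def vstarRemove {n : ℕ} (v : Fin n → Fin n → ℝ) (i j : Fin n) : ℝ :=
  ⨆ M : {i' : Fin n // i' ≠ i} ≃ {j' : Fin n // j' ≠ j},
    ∑ j' : {j' : Fin n // j' ≠ j}, v (M.symm j') j'

/-- Buyer `j` is joined, by an `M`-alternating path in the equality graph starting and
ending with a matching edge (`j = j_0, i_0 = M j_0, j_1, i_1 = M j_1, …, i_k = M j_k`),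
to an item of price zero. -/
def AltPathZero {n : ℕ} (v : Fin n → Fin n → ℝ) (p : Fin n → ℝ) (M : Fin n ≃ Fin n)
    (j : Fin n) : Prop :=
  ∃ k : ℕ, ∃ js : Fin (k + 1) → Fin n,
    js 0 = j ∧
    (∀ t : Fin k,
      p (M (js t.castSucc)) + profit v p (js t.succ) = v (M (js t.castSucc)) (js t.succ)) ∧
    p (M (js (Fin.last k))) = 0

/-- A (partial) matching given as a set of item-buyer pairs: pairwise non-incident edges. -/
def IsMatching {n : ℕ} (Mset : Finset (Fin n × Fin n)) : Prop :=
  ∀ e ∈ Mset, ∀ e' ∈ Mset, e ≠ e' → e.1 ≠ e'.1 ∧ e.2 ≠ e'.2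

/-- All edges of `Mset` are equality edges w.r.t. the dual solution `(p, q)`. -/
def InEqualityGraph {n : ℕ} (v : Fin n → Fin n → ℝ) (p q : Fin n → ℝ)
    (Mset : Finset (Fin n × Fin n)) : Prop :=
  ∀ e ∈ Mset, p e.1 + q e.2 = v e.1 e.2

/-- Item `i` is reachable from buyer `j` along an `Mset`-alternating path of equality
edges: `j = j_0, i_0, j_1, i_1, …, i_k = i`, where each `(i_t, j_t)` is a non-matching
equality edge and each `(i_t, j_{t+1})` is a matching edge. -/
def ReachFrom {n : ℕ} (v : Fin n → Fin n → ℝ) (p q : Fin n → ℝ)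
    (Mset : Finset (Fin n × Fin n)) (j i : Fin n) : Prop :=
  ∃ k : ℕ, ∃ is js : Fin (k + 1) → Fin n,
    js 0 = j ∧ is (Fin.last k) = i ∧
    (∀ t, p (is t) + q (js t) = v (is t) (js t) ∧ (is t, js t) ∉ Mset) ∧
    (∀ t : Fin k, (is t.castSucc, js t.succ) ∈ Mset)

section Aux

variable {n : ℕ}

lemma profit_ge (v : Fin n → Fin n → ℝ) (p : Fin n → ℝ) (i j : Fin n) :
    v i j - p i ≤ profit v p j := by
  haveI : Nonempty (Fin n) := ⟨j⟩
  exact le_ciSup (f := fun i => v i j - p i) (Set.Finite.bddAbove (Set.finite_range _)) i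

lemma profit_eq_of_witness {v : Fin n → Fin n → ℝ} {p : Fin n → ℝ} {M : Fin n ≃ Fin n}
    (hW : ClearingWitness v p M) (j : Fin n) :
    profit v p j = v (M j) j - p (M j) := by
  haveI : Nonempty (Fin n) := ⟨j⟩
  exact le_antisymm (ciSup_le fun i => hW j i) (profit_ge v p (M j) j)

lemma mval_le_dual (v : Fin n → Fin n → ℝ) (p : Fin n → ℝ) (N : Fin n ≃ Fin n) :
    mval v N ≤ ∑ i, p i + ∑ j, profit v p j := by
  have h1 : mval v N ≤ ∑ j, (p (N j) + profit v p j) := by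
    refine Finset.sum_le_sum fun j _ => ?_
    have := profit_ge v p (N j) j; linarith
  have h2 : ∑ j, (p (N j) + profit v p j) = ∑ i, p i + ∑ j, profit v p j := by
    rw [Finset.sum_add_distrib, Equiv.sum_comp N p]
  linarith

lemma vstar_eq_dual {v : Fin n → Fin n → ℝ} {p : Fin n → ℝ} (hMC : IsMC v p) :
    vstar v = ∑ i, p i + ∑ j, profit v p j := by
  obtain ⟨M₀, hM₀⟩ := hMC
  refine le_antisymm (ciSup_le fun N => mval_le_dual v p N) ?_
  have h2 : ∑ i, p i + ∑ j, profit v p j = mval v M₀ := by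
    rw [← Equiv.sum_comp M₀ p, ← Finset.sum_add_distrib]
    refine Finset.sum_congr rfl fun j _ => ?_
    rw [profit_eq_of_witness hM₀]; ring
  rw [h2]
  exact le_ciSup (Set.Finite.bddAbove (Set.finite_range _)) M₀

lemma witness_of_max {v : Fin n → Fin n → ℝ} {p : Fin n → ℝ} (hMC : IsMC v p)
    {M : Fin n ≃ Fin n} (hMmax : mval v M = vstar v) : ClearingWitness v p M := by
  have hle : ∀ j ∈ Finset.univ, v (M j) j ≤ p (M j) + profit v p j := by
    intro j _; have := profit_ge v p (M j) j; linarith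
  have hsum : ∑ j, v (M j) j = ∑ j, (p (M j) + profit v p j) := by
    have : (mval v M : ℝ) = ∑ i, p i + ∑ j, profit v p j := by
      rw [hMmax, vstar_eq_dual hMC]
    calc ∑ j, v (M j) j = mval v M := rfl
      _ = ∑ i, p i + ∑ j, profit v p j := this
      _ = ∑ j, (p (M j) + profit v p j) := by
          rw [← Equiv.sum_comp M p, ← Finset.sum_add_distrib]
  have heach := (Finset.sum_eq_sum_iff_of_le hle).1 hsum
  intro j i'
  have hj := heach j (Finset.mem_univ j)
  have := profit_ge v p i' j
  linarith

/-- Buyer `b` is reachable from `j` by an alternating path of equality edges. -/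
inductive Reach (v : Fin n → Fin n → ℝ) (p : Fin n → ℝ) (M : Fin n ≃ Fin n) (j : Fin n) :
    Fin n → Prop
  | base : Reach v p M j j
  | step {a b : Fin n} : Reach v p M j a →
      p (M a) + profit v p b = v (M a) b → Reach v p M j b

lemma exists_reach_zero {v : Fin n → Fin n → ℝ} {p : Fin n → ℝ}
    (hopt : BuyerOptimal v p) {M : Fin n ≃ Fin n} (hW : ClearingWitness v p M) (j : Fin n) :
    ∃ b, Reach v p M j b ∧ p (M b) = 0 := by
  classical
  by_contra hcon
  push_neg at hcon
  set R : Finset (Fin n) := Finset.univ.filter (fun b => Reach v p M j b) with hR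
  have hmemR : ∀ b, b ∈ R ↔ Reach v p M j b := by
    intro b; simp [hR]
  have hjR : j ∈ R := (hmemR j).2 Reach.base
  set T : Finset (Fin n × Fin n) := R ×ˢ Rᶜ with hT
  set F : Finset ℝ := R.image (fun b => p (M b)) ∪
      T.image (fun ab => p (M ab.1) + profit v p ab.2 - v (M ab.1) ab.2) with hF
  have hFne : F.Nonempty := ⟨p (M j), by
    refine Finset.mem_union_left _ (Finset.mem_image.2 ⟨j, hjR, rfl⟩)⟩
  set ε := F.min' hFne with hε
  have hεle : ∀ x ∈ F, ε ≤ x := fun x hx => Finset.min'_le F x hx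
  have hεpos : 0 < ε := by
    have hpos : ∀ x ∈ F, 0 < x := by
      intro x hx
      rcases Finset.mem_union.1 hx with hx | hx
      · obtain ⟨b, hb, rfl⟩ := Finset.mem_image.1 hx
        exact lt_of_le_of_ne (hopt.1 (M b)) (Ne.symm (hcon b ((hmemR b).1 hb)))
      · obtain ⟨⟨a, b⟩, hab, rfl⟩ := Finset.mem_image.1 hx
        obtain ⟨ha, hb⟩ := Finset.mem_product.1 hab
        have hbnR : ¬ Reach v p M j b := by
          intro hreach
          exact (Finset.mem_compl.1 hb) ((hmemR b).2 hreach)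
        have hge : v (M a) b - p (M a) ≤ profit v p b := profit_ge v p (M a) b
        rcases lt_or_eq_of_le hge with h | h
        · simp only
          linarith
        · exact absurd (Reach.step ((hmemR a).1 ha) (by linarith)) hbnR
    exact hpos ε (Finset.min'_mem F hFne)
  set S : Finset (Fin n) := R.image M with hS
  have hmemS : ∀ b : Fin n, M b ∈ S ↔ b ∈ R := by
    intro b
    constructor
    · intro h
      obtain ⟨c, hc, hcb⟩ := Finset.mem_image.1 h
      rwa [← M.injective hcb]
    · intro h; exact Finset.mem_image.2 ⟨b, h, rfl⟩
  set p' : Fin n → ℝ := fun i => if i ∈ S then p i - ε else p i with hp'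
  have hεleP : ∀ i ∈ S, ε ≤ p i := by
    intro i hi
    obtain ⟨b, hb, rfl⟩ := Finset.mem_image.1 hi
    exact hεle _ (Finset.mem_union_left _ (Finset.mem_image.2 ⟨b, hb, rfl⟩))
  have hp'nonneg : ∀ i, 0 ≤ p' i := by
    intro i
    by_cases h : i ∈ S
    · simp only [hp', if_pos h]; have := hεleP i h; linarith
    · simp only [hp', if_neg h]; exact hopt.1 i
  have hMC' : IsMC v p' := by
    refine ⟨M, fun b i' => ?_⟩
    have hqb : profit v p b = v (M b) b - p (M b) := profit_eq_of_witness hW b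
    have hbase : v i' b - p i' ≤ v (M b) b - p (M b) := hW b i'
    by_cases hbR : b ∈ R
    · have h1 : M b ∈ S := (hmemS b).2 hbR
      by_cases hi' : i' ∈ S
      · simp only [hp', if_pos h1, if_pos hi']; linarith
      · simp only [hp', if_pos h1, if_neg hi']; linarith
    · have h1 : M b ∉ S := fun h => hbR ((hmemS b).1 h)
      by_cases hi' : i' ∈ S
      · obtain ⟨a, ha, rfl⟩ := Finset.mem_image.1 hi'
        have habT : (a, b) ∈ T := Finset.mem_product.2 ⟨ha, Finset.mem_compl.2 hbR⟩
        have hslack : ε ≤ p (M a) + profit v p b - v (M a) b :=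
          hεle _ (Finset.mem_union_right _ (Finset.mem_image.2 ⟨(a, b), habT, rfl⟩))
        simp only [hp', if_pos hi', if_neg h1]
        linarith
      · simp only [hp', if_neg hi', if_neg h1]; exact hbase
  have hsum : ∑ i, p' i < ∑ i, p i := by
    have h1 : ∑ i, p' i = ∑ i, (p i - if i ∈ S then ε else 0) := by
      refine Finset.sum_congr rfl fun i _ => ?_
      by_cases h : i ∈ S <;> simp [hp', h]
    have h2 : ∑ i : Fin n, (if i ∈ S then ε else (0:ℝ)) = S.card • ε := by
      rw [Finset.sum_ite_mem]
      simp [Finset.inter_eq_right.2 (Finset.subset_univ S)]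
    have hScard : 1 ≤ S.card := Finset.card_pos.2 ⟨M j, (hmemS j).2 hjR⟩
    have h3 : ε ≤ S.card • ε := by
      have := nsmul_le_nsmul_left (le_of_lt hεpos) hScard
      simpa using this
    rw [h1, Finset.sum_sub_distrib, h2]
    linarith
  have := hopt.2.2 p' hp'nonneg hMC'
  linarith

lemma reach_path {v : Fin n → Fin n → ℝ} {p : Fin n → ℝ} {M : Fin n ≃ Fin n} {j b : Fin n}
    (h : Reach v p M j b) :
    ∃ l : List (Fin n), l.Nodup ∧ l.head? = some j ∧ l.getLast? = some b ∧
      l.Chain' (fun a c => p (M a) + profit v p c = v (M a) c) := by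
  classical
  induction h with
  | base => exact ⟨[j], by simp, rfl, rfl, List.isChain_singleton _⟩
  | @step a b hr hedge ih =>
    obtain ⟨l, hnd, hhead, hlast, hchain⟩ := ih
    by_cases hb : b ∈ l
    · set m := l.idxOf b with hm
      have hmlt : m < l.length := List.idxOf_lt_length_iff.2 hb
      refine ⟨l.take (m + 1), (List.take_sublist _ _).nodup hnd, ?_, ?_, List.IsChain.take hchain _⟩
      · cases l with
        | nil => simp at hhead
        | cons c cs => simpa using hhead
      · have hlen : (l.take (m + 1)).length = m + 1 := by
          rw [List.length_take]; omega
        rw [List.getLast?_eq_getElem?, hlen]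
        simp only [Nat.add_sub_cancel]
        rw [List.getElem?_take, if_pos (by omega : m < m + 1)]
        rw [List.getElem?_eq_getElem hmlt]
        simp [hm, List.getElem_idxOf]
    · refine ⟨l ++ [b], ?_, ?_, List.getLast?_concat, ?_⟩
      · simp [List.nodup_append, hnd, hb]; intro a ha h; exact hb (h ▸ ha)
      · have hlne : l ≠ [] := by intro h; rw [h] at hhead; simp at hhead
        rw [List.head?_append_of_ne_nil _ hlne]; exact hhead
      · rw [List.Chain', List.isChain_append]
        refine ⟨hchain, by simp, ?_⟩
        intro x hx y hy
        rw [hlast] at hx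
        simp at hx hy
        subst hx; subst hy
        exact hedge

lemma augment {v : Fin n → Fin n → ℝ} {p : Fin n → ℝ} {M : Fin n ≃ Fin n} {j b : Fin n}
    (hW : ClearingWitness v p M)
    {l : List (Fin n)} (hnd : l.Nodup) (hhead : l.head? = some j) (hlast : l.getLast? = some b)
    (hchain : l.Chain' (fun a c => p (M a) + profit v p c = v (M a) c))
    (hb0 : p (M b) = 0) :
    ∃ N : Fin n ≃ Fin n, p (N j) = 0 ∧
      ∀ j', j' ≠ j → p (N j') + profit v p j' = v (N j') j' := by
  classical
  obtain ⟨c, cs, rfl⟩ : ∃ c cs, l = c :: cs := by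
    cases l with
    | nil => simp at hhead
    | cons c cs => exact ⟨c, cs, rfl⟩
  set l := c :: cs with hl
  have hc : c = j := by simpa [hl] using hhead
  have hlastb : l.getLast (by simp [hl]) = b := by
    have := List.getLast?_eq_getLast (l := l) (by simp [hl])
    rw [hlast] at this
    exact (Option.some_injective _ this.symm)
  set σ : Equiv.Perm (Fin n) := (l.formPerm)⁻¹ with hσ
  refine ⟨σ.trans M, ?_, ?_⟩
  · have h1 : l.formPerm b = j := by
      rw [← hlastb, ← hc]
      exact List.formPerm_apply_getLast c cs
    have h2 : σ j = b := by
      rw [hσ, Equiv.Perm.inv_def, Equiv.symm_apply_eq]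
      exact h1.symm
    simp only [Equiv.trans_apply, h2, hb0]
  · intro j' hj'
    by_cases hmem : j' ∈ l
    · obtain ⟨t, htlt, hteq⟩ := List.mem_iff_getElem.1 hmem
      have ht0 : t ≠ 0 := by
        intro h
        subst h
        apply hj'
        rw [← hteq]
        simp [hl, hc]
      obtain ⟨s, rfl⟩ : ∃ s, t = s + 1 := ⟨t - 1, by omega⟩
      have hfp : l.formPerm l[s] = l[s + 1] :=
        List.formPerm_apply_lt_getElem l hnd s htlt
      have hσj' : σ j' = l[s] := by
        rw [hσ, Equiv.Perm.inv_def, Equiv.symm_apply_eq, hfp]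
        exact hteq.symm
      have hedge := List.isChain_iff_getElem.1 hchain s (by omega)
      simp only [Equiv.trans_apply, hσj']
      rw [← hteq]
      exact hedge
    · have hfix : σ j' = j' := by
        rw [hσ, Equiv.Perm.inv_def, Equiv.symm_apply_eq]
        exact (List.formPerm_apply_of_notMem hmem).symm
      simp only [Equiv.trans_apply, hfix]
      have := profit_eq_of_witness hW j'
      linarith

end Aux

/-- for buyer-optimal market clearing `p` with profits `q`,
`v*_{-j} = v* - q j` for every buyer `j`. -/
theorem stmt_11 (n : ℕ) (v : Fin n → Fin n → ℝ) (hv : ∀ i j, 0 ≤ v i j)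
    (p : Fin n → ℝ) (hopt : BuyerOptimal v p)
    (M : Fin n ≃ Fin n) (hMmax : mval v M = vstar v) (j : Fin n) :
    vstarDummy v j = vstar v - profit v p j := by
  classical
  haveI : Nonempty (Fin n ≃ Fin n) := ⟨Equiv.refl _⟩
  have hW : ClearingWitness v p M := witness_of_max hopt.2.1 hMmax
  have hdual : vstar v = ∑ i, p i + ∑ j', profit v p j' := vstar_eq_dual hopt.2.1
  have hub : vstarDummy v j ≤ vstar v - profit v p j := by
    refine ciSup_le fun N => ?_
    have h1 : ∑ j' ∈ Finset.univ.erase j, v (N j') j' ≤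
        ∑ j' ∈ Finset.univ.erase j, (p (N j') + profit v p j') :=
      Finset.sum_le_sum (fun j' _ => by have := profit_ge v p (N j') j'; linarith)
    have h2 : ∑ j' ∈ Finset.univ.erase j, (p (N j') + profit v p j') + (p (N j) + profit v p j)
        = ∑ j', (p (N j') + profit v p j') :=
      Finset.sum_erase_add Finset.univ (fun j' => p (N j') + profit v p j') (Finset.mem_univ j)
    have h3 : ∑ j', (p (N j') + profit v p j') = ∑ i, p i + ∑ j', profit v p j' := by
      rw [Finset.sum_add_distrib, Equiv.sum_comp N p]
    have h4 : 0 ≤ p (N j) := hopt.1 _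
    rw [hdual]
    linarith
  obtain ⟨b, hreach, hb0⟩ := exists_reach_zero hopt hW j
  obtain ⟨l, hnd, hh, hl, hch⟩ := reach_path hreach
  obtain ⟨N, hN0, hNe⟩ := augment hW hnd hh hl hch hb0
  have heq : ∑ j' ∈ Finset.univ.erase j, v (N j') j' = vstar v - profit v p j := by
    have h1 : ∑ j' ∈ Finset.univ.erase j, v (N j') j' =
        ∑ j' ∈ Finset.univ.erase j, (p (N j') + profit v p j') :=
      Finset.sum_congr rfl (fun j' hj' => (hNe j' (Finset.ne_of_mem_erase hj')).symm)
    have h2 : ∑ j' ∈ Finset.univ.erase j, (p (N j') + profit v p j') + (p (N j) + profit v p j)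
        = ∑ j', (p (N j') + profit v p j') :=
      Finset.sum_erase_add Finset.univ (fun j' => p (N j') + profit v p j') (Finset.mem_univ j)
    have h3 : ∑ j', (p (N j') + profit v p j') = ∑ i, p i + ∑ j', profit v p j' := by
      rw [Finset.sum_add_distrib, Equiv.sum_comp N p]
    rw [h1, hdual]
    linarith
  have hlb : vstar v - profit v p j ≤ vstarDummy v j := by
    rw [← heq]
    exact le_ciSup (f := fun N : Fin n ≃ Fin n => ∑ j' ∈ Finset.univ.erase j, v (N j') j')
      (Set.Finite.bddAbove (Set.finite_range _)) N
  linarith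


end
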